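/- Let D be an unbounded self-adjoint operator on a Hilbert space of the form D = [[0, D⁻],[D⁺, 0]] with respect to a ℤ/2-grading, where D⁻ = (D⁺)*. Then the matrix e(t) = [[e^{−tD⁻D⁺}, e^{−(t/2)D⁻D⁺}((1−e^{−tD⁻D⁺})/(D⁻D⁺))D⁻],[e^{−(t/2)D⁺D⁻}D⁺, 1 − e^{−tD⁺D⁻}]] is an idempotent for every t > 0: e(t)² = e(t). -/

import Mathlib

open ContinuousLinearMap NormedSpace MeasureTheory intervalIntegral Nat

section aux

variable {𝔸 : Type*} [NormedRing 𝔸] [NormedAlgebra ℂ 𝔸] [CompleteSpace 𝔸]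

lemma heat_exp_cont (A : 𝔸) : Continuous fun s : ℝ => exp (-(s • A)) := by
  letI : NormedAlgebra ℚ 𝔸 := NormedAlgebra.restrictScalars ℚ ℂ 𝔸
  exact exp_continuous.comp ((continuous_id.smul continuous_const).neg)

lemma heat_ftc (A : 𝔸) (t : ℝ) :
    (∫ s in (0:ℝ)..t, exp (-(s • A))) * A = 1 - exp (-(t • A)) := by
  have hexp : (exp : 𝔸 → 𝔸) = exp := rfl
  have hc : Continuous fun s : ℝ => exp (-(s • A)) := heat_exp_cont A
  have hint : IntervalIntegrable (fun s : ℝ => exp (-(s • A))) volume 0 t :=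
    hc.intervalIntegrable 0 t
  have hd : ∀ s : ℝ, HasDerivAt (fun u : ℝ => -exp (u • (-A))) (exp (-(s • A)) * A) s := by
    intro s
    have h := (hasDerivAt_exp_smul_const (𝕂 := ℝ) (-A) s).neg
    rw [hexp] at h
    simpa [smul_neg, mul_neg, Pi.neg_def] using h
  have h1 : (∫ s in (0:ℝ)..t, exp (-(s • A)) * A) = 1 - exp (-(t • A)) := by
    have hi : IntervalIntegrable (fun s : ℝ => exp (-(s • A)) * A) volume 0 t :=
      (hc.mul continuous_const).intervalIntegrable 0 t
    have h2 := intervalIntegral.integral_eq_sub_of_hasDerivAt (fun s _ => hd s) hi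
    simpa [smul_neg, exp_zero, neg_add_eq_sub] using h2
  have h3 := ((ContinuousLinearMap.mul ℂ 𝔸).flip A).intervalIntegral_comp_comm hint
  simp only [flip_apply, mul_apply'] at h3
  rw [← h3, h1]

lemma heat_commute_integral {a b : ℝ} (A : 𝔸) (g : ℝ → 𝔸)
    (hg : IntervalIntegrable g volume a b) (h : ∀ s, Commute A (g s)) :
    Commute A (∫ s in a..b, g s) := by
  have h1 := (ContinuousLinearMap.mul ℂ 𝔸 A).intervalIntegral_comp_comm hg
  simp only [mul_apply'] at h1
  have h2 := ((ContinuousLinearMap.mul ℂ 𝔸).flip A).intervalIntegral_comp_comm hg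
  simp only [flip_apply, mul_apply'] at h2
  unfold Commute SemiconjBy
  rw [← h1, ← h2]
  exact intervalIntegral.integral_congr fun s _ => (h s).eq

end aux

section intertwine

variable {E F : Type*} [NormedAddCommGroup E] [NormedSpace ℂ E] [CompleteSpace E]
  [NormedAddCommGroup F] [NormedSpace ℂ F] [CompleteSpace F]

lemma heat_intertwine_exp (T : E →L[ℂ] F) (A : E →L[ℂ] E) (B : F →L[ℂ] F)
    (h : T ∘L A = B ∘L T) : T ∘L exp A = exp B ∘L T := by
  have hpow : ∀ n : ℕ, T ∘L (A ^ n) = (B ^ n) ∘L T := by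
    intro n
    induction n with
    | zero => simp [pow_zero, one_def]
    | succ n ih =>
        rw [pow_succ, pow_succ]
        show T ∘L ((A ^ n) ∘L A) = ((B ^ n) ∘L B) ∘L T
        rw [← comp_assoc, ih, comp_assoc, h, ← comp_assoc]
  have hsA := expSeries_summable' (𝕂 := ℂ) A
  have hsB := expSeries_summable' (𝕂 := ℂ) B
  have hL := (hsA.hasSum.mapL (ContinuousLinearMap.compL ℂ E E F T)).tsum_eq
  have hR := (hsB.hasSum.mapL ((ContinuousLinearMap.compL ℂ E F F).flip T)).tsum_eq
  rw [exp_eq_tsum ℂ, exp_eq_tsum ℂ]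
  calc T ∘L (∑' n : ℕ, (n !⁻¹ : ℂ) • A ^ n)
      = (ContinuousLinearMap.compL ℂ E E F T) (∑' n : ℕ, (n !⁻¹ : ℂ) • A ^ n) := rfl
    _ = ∑' n : ℕ, (ContinuousLinearMap.compL ℂ E E F T) ((n !⁻¹ : ℂ) • A ^ n) := hL.symm
    _ = ∑' n : ℕ, ((ContinuousLinearMap.compL ℂ E F F).flip T) ((n !⁻¹ : ℂ) • B ^ n) := by
        refine tsum_congr fun n => ?_
        simp only [_root_.map_smul, ContinuousLinearMap.compL_apply, flip_apply]
        rw [hpow n]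
    _ = ((ContinuousLinearMap.compL ℂ E F F).flip T) (∑' n : ℕ, (n !⁻¹ : ℂ) • B ^ n) := hR
    _ = (∑' n : ℕ, (n !⁻¹ : ℂ) • B ^ n) ∘L T := rfl

lemma heat_intertwine_integral (T : E →L[ℂ] F) {a b : ℝ}
    (f : ℝ → (E →L[ℂ] E)) (g : ℝ → (F →L[ℂ] F))
    (hf : IntervalIntegrable f volume a b) (hg : IntervalIntegrable g volume a b)
    (h : ∀ s, T ∘L f s = g s ∘L T) :
    T ∘L (∫ s in a..b, f s) = (∫ s in a..b, g s) ∘L T := by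
  have h1 := ((ContinuousLinearMap.compL ℂ E E F) T).intervalIntegral_comp_comm hf
  have h2 := (((ContinuousLinearMap.compL ℂ E F F)).flip T).intervalIntegral_comp_comm hg
  simp only [ContinuousLinearMap.compL_apply, flip_apply] at h1 h2
  rw [← h1, ← h2]
  exact intervalIntegral.integral_congr fun s _ => h s

end intertwine

set_option maxHeartbeats 1000000 in
theorem heat_idempotent
    {Hp Hm : Type*}
    [NormedAddCommGroup Hp] [InnerProductSpace ℂ Hp] [CompleteSpace Hp]
    [NormedAddCommGroup Hm] [InnerProductSpace ℂ Hm] [CompleteSpace Hm]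
    (Dp : Hp →L[ℂ] Hm) (t : ℝ) (ht : 0 < t) :
    ∀ (Dm : Hm →L[ℂ] Hp), Dm = ContinuousLinearMap.adjoint Dp →
    ∀ (P : Hp →L[ℂ] Hp), P = Dm ∘L Dp →
    ∀ (Q : Hm →L[ℂ] Hm), Q = Dp ∘L Dm →
    ∀ (e₁₁ : Hp →L[ℂ] Hp), e₁₁ = NormedSpace.exp (-(t • P)) →
    ∀ (e₁₂ : Hm →L[ℂ] Hp),
      e₁₂ = (NormedSpace.exp (-((t / 2) • P)) ∘L
        (∫ s in (0 : ℝ)..t, NormedSpace.exp (-(s • P)))) ∘L Dm →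
    ∀ (e₂₁ : Hp →L[ℂ] Hm), e₂₁ = NormedSpace.exp (-((t / 2) • Q)) ∘L Dp →
    ∀ (e₂₂ : Hm →L[ℂ] Hm), e₂₂ = 1 - NormedSpace.exp (-(t • Q)) →
      (e₁₁ ∘L e₁₁ + e₁₂ ∘L e₂₁ = e₁₁ ∧
       e₁₁ ∘L e₁₂ + e₁₂ ∘L e₂₂ = e₁₂ ∧
       e₂₁ ∘L e₁₁ + e₂₂ ∘L e₂₁ = e₂₁ ∧
       e₂₁ ∘L e₁₂ + e₂₂ ∘L e₂₂ = e₂₂) := by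
  intro Dm _ P hP Q hQ e₁₁ h11 e₁₂ h12 e₂₁ h21 e₂₂ h22
  subst h11 h12 h21 h22
  -- integrability
  have hintP : IntervalIntegrable (fun s : ℝ => exp (-(s • P))) volume 0 t :=
    (heat_exp_cont P).intervalIntegrable 0 t
  have hintQ : IntervalIntegrable (fun s : ℝ => exp (-(s • Q))) volume 0 t :=
    (heat_exp_cont Q).intervalIntegrable 0 t
  -- commuting exponents
  have hcP : ∀ a b : ℝ, Commute (-(a • P)) (-(b • P)) := fun a b =>
    (((Commute.refl P).smul_left a).smul_right b).neg_left.neg_right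
  have hcQ : ∀ a b : ℝ, Commute (-(a • Q)) (-(b • Q)) := fun a b =>
    (((Commute.refl Q).smul_left a).smul_right b).neg_left.neg_right
  have hEadd : ∀ a b : ℝ, exp (-(a • P)) * exp (-(b • P)) = exp (-((a + b) • P)) := by
    intro a b
    letI : NormedAlgebra ℚ (Hp →L[ℂ] Hp) := NormedAlgebra.restrictScalars ℚ ℂ _
    rw [← exp_add_of_commute (hcP a b), ← neg_add, ← add_smul]
  have hFadd : ∀ a b : ℝ, exp (-(a • Q)) * exp (-(b • Q)) = exp (-((a + b) • Q)) := by
    intro a b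
    letI : NormedAlgebra ℚ (Hm →L[ℂ] Hm) := NormedAlgebra.restrictScalars ℚ ℂ _
    rw [← exp_add_of_commute (hcQ a b), ← neg_add, ← add_smul]
  -- intertwining
  have hDpP : Dp ∘L P = Q ∘L Dp := by rw [hP, hQ, comp_assoc]
  have hDmQ : Dm ∘L Q = P ∘L Dm := by rw [hP, hQ, comp_assoc]
  have hDpE : ∀ a : ℝ, Dp ∘L exp (-(a • P)) = exp (-(a • Q)) ∘L Dp := by
    intro a
    refine heat_intertwine_exp Dp _ _ ?_
    rw [comp_neg, neg_comp, comp_smul, smul_comp, hDpP]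
  have hDmF : ∀ a : ℝ, Dm ∘L exp (-(a • Q)) = exp (-(a • P)) ∘L Dm := by
    intro a
    refine heat_intertwine_exp Dm _ _ ?_
    rw [comp_neg, neg_comp, comp_smul, smul_comp, hDmQ]
  have hDpE' : ∀ (a : ℝ) (X : Hm →L[ℂ] Hp),
      Dp ∘L (exp (-(a • P)) ∘L X) = exp (-(a • Q)) ∘L (Dp ∘L X) := by
    intro a X; rw [← comp_assoc, hDpE a, comp_assoc]
  have hDmF' : ∀ (a : ℝ) (X : Hp →L[ℂ] Hm),
      Dm ∘L (exp (-(a • Q)) ∘L X) = exp (-(a • P)) ∘L (Dm ∘L X) := by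
    intro a X; rw [← comp_assoc, hDmF a, comp_assoc]
  have hpush : Dp ∘L (∫ s in (0:ℝ)..t, exp (-(s • P))) =
      (∫ s in (0:ℝ)..t, exp (-(s • Q))) ∘L Dp :=
    heat_intertwine_integral Dp _ _ hintP hintQ hDpE
  have hpush' : ∀ X : Hm →L[ℂ] Hp,
      Dp ∘L ((∫ s in (0:ℝ)..t, exp (-(s • P))) ∘L X) =
      (∫ s in (0:ℝ)..t, exp (-(s • Q))) ∘L (Dp ∘L X) := by
    intro X; rw [← comp_assoc, hpush, comp_assoc]
  -- FTC
  have hIP := heat_ftc P t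
  have hJQ := heat_ftc Q t
  -- commutation with the integral
  have hcommEI : ∀ a : ℝ,
      Commute (exp (-(a • P))) (∫ s in (0:ℝ)..t, exp (-(s • P))) := fun a =>
    heat_commute_integral _ _ hintP (fun s => (hcP a s).exp)
  have hcommFJ : ∀ a : ℝ,
      Commute (exp (-(a • Q))) (∫ s in (0:ℝ)..t, exp (-(s • Q))) := fun a =>
    heat_commute_integral _ _ hintQ (fun s => (hcQ a s).exp)
  set I := ∫ s in (0:ℝ)..t, exp (-(s • P)) with hI
  set J := ∫ s in (0:ℝ)..t, exp (-(s • Q)) with hJ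
  set Et := exp (-(t • P)) with hEt
  set E2 := exp (-((t/2) • P)) with hE2
  set Ft := exp (-(t • Q)) with hFt
  set F2 := exp (-((t/2) • Q)) with hF2
  have hE2E2 : E2 * E2 = Et := by rw [hE2, hEt, hEadd, add_halves]
  have hF2F2 : F2 * F2 = Ft := by rw [hF2, hFt, hFadd, add_halves]
  have hEtE2 : Commute Et E2 := (hcP t (t/2)).exp
  have hFtF2 : Commute Ft F2 := (hcQ t (t/2)).exp
  refine ⟨?_, ?_, ?_, ?_⟩
  · -- (1,1) entry
    rw [comp_assoc]
    rw [hDmF' (t/2) Dp, ← hP]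
    show Et * Et + (E2 * I) * (E2 * P) = Et
    have key : (E2 * I) * (E2 * P) = Et * (1 - Et) := by
      calc (E2 * I) * (E2 * P) = E2 * ((I * E2) * P) := by
            rw [mul_assoc, mul_assoc]
        _ = E2 * ((E2 * I) * P) := by rw [(hcommEI (t/2)).eq]
        _ = (E2 * E2) * (I * P) := by
            rw [mul_assoc E2 I P, ← mul_assoc, ← mul_assoc, mul_assoc (E2 * E2)]
        _ = Et * (1 - Et) := by rw [hE2E2, hIP]
    rw [key, mul_sub, mul_one]
    abel
  · -- (1,2) entry
    rw [comp_sub, one_def, comp_id]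
    have hA : ((E2 ∘L I) ∘L Dm) ∘L Ft = Et ∘L ((E2 ∘L I) ∘L Dm) := by
      rw [comp_assoc, hDmF t, ← comp_assoc, ← comp_assoc]
      congr 1
      show (E2 * I) * Et = Et * (E2 * I)
      exact (hEtE2.symm.mul_left (hcommEI t).symm).eq
    rw [hA]
    abel
  · -- (2,1) entry
    rw [sub_comp, one_def, id_comp]
    have hB : (F2 ∘L Dp) ∘L Et = Ft ∘L (F2 ∘L Dp) := by
      rw [comp_assoc, hDpE t, ← comp_assoc, ← comp_assoc]
      congr 1
      show F2 * Ft = Ft * F2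
      exact hFtF2.symm.eq
    rw [hB]
    abel
  · -- (2,2) entry
    have hC : (F2 ∘L Dp) ∘L ((E2 ∘L I) ∘L Dm) = Ft * (1 - Ft) := by
      calc (F2 ∘L Dp) ∘L ((E2 ∘L I) ∘L Dm)
          = F2 ∘L (Dp ∘L (E2 ∘L (I ∘L Dm))) := by rw [comp_assoc, comp_assoc]
        _ = F2 ∘L (F2 ∘L (Dp ∘L (I ∘L Dm))) := by rw [hDpE' (t/2)]
        _ = F2 ∘L (F2 ∘L (J ∘L (Dp ∘L Dm))) := by rw [hpush']
        _ = F2 ∘L (F2 ∘L (J ∘L Q)) := by rw [← hQ]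
        _ = Ft * (1 - Ft) := by
            show F2 * (F2 * (J * Q)) = _
            rw [← mul_assoc, hF2F2, hJQ]
    rw [hC]
    show Ft * (1 - Ft) + (1 - Ft) * (1 - Ft) = 1 - Ft
    noncomm_ring
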